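/- Let N be prime, δ > 0, and suppose M = K/(1−δ) symbols are received in total from s ≥ 1 stream objects with independently, uniformly chosen SOPIs, with M² ≤ 2N. Let Y be the number of distinct symbol IDs among the M received symbols. Then Pr[Y < K] ≤ 1/(δ²·N). -/

import Mathlib

open Finset

namespace SopiAux

variable {N s M : ℕ}

/-- The sample space: all SOPI assignments with nonzero `B` components. -/
def Omega (N s : ℕ) [NeZero N] : Finset (Fin s → ZMod N × ZMod N) :=
  Finset.univ.filter (fun P => ∀ t, (P t).2 ≠ 0)

/-- Collision event for the pair of received symbols `e`. -/
def collP (f : Fin M → Fin s × ZMod N) (P : Fin s → ZMod N × ZMod N)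
    (e : Fin M × Fin M) : Prop :=
  (P (f e.1).1).1 + (f e.1).2 * (P (f e.1).1).2
    = (P (f e.2).1).1 + (f e.2).2 * (P (f e.2).1).2

instance (f : Fin M → Fin s × ZMod N) (P : Fin s → ZMod N × ZMod N) :
    DecidablePred (collP f P) := fun e => by unfold collP; infer_instance

/-- Cross-stream pairs of received symbols. -/
def pairE (f : Fin M → Fin s × ZMod N) : Finset (Fin M × Fin M) :=
  Finset.univ.filter (fun e => e.1 < e.2 ∧ (f e.1).1 ≠ (f e.2).1)

variable [NeZero N]

lemma mem_Omega {P : Fin s → ZMod N × ZMod N} : P ∈ Omega N s ↔ ∀ t, (P t).2 ≠ 0 := by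
  simp [Omega]

/-- Overwrite the `A`-coordinate at one stream. -/
lemma overwrite_one (t : Fin s) (Q : (Fin s → ZMod N × ZMod N) → Prop)
    [DecidablePred Q]
    (hrec : ∀ P P' : Fin s → ZMod N × ZMod N, Q P → Q P' →
      (∀ v, v ≠ t → P v = P' v) → (∀ v, (P v).2 = (P' v).2) → (P t).1 = (P' t).1) :
    ((Omega N s).filter Q).card * N ≤ (Omega N s).card := by
  classical
  have key := Finset.card_le_card_of_injOn
    (f := fun Pa : (Fin s → ZMod N × ZMod N) × ZMod N =>
      Function.update Pa.1 t ((Pa.2, (Pa.1 t).2) : ZMod N × ZMod N))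
    (s := ((Omega N s).filter Q) ×ˢ (Finset.univ : Finset (ZMod N)))
    (t := Omega N s) ?_ ?_
  · simpa [Finset.card_product, ZMod.card] using key
  · rintro ⟨P, a⟩ hPa
    simp only [Finset.mem_coe, Finset.mem_product, Finset.mem_filter, mem_Omega] at hPa
    rw [Finset.mem_coe, mem_Omega]
    intro v
    rcases eq_or_ne v t with rfl | hv
    · simpa using hPa.1.1 v
    · simpa [Function.update_of_ne hv] using hPa.1.1 v
  · rintro ⟨P, a⟩ hPa ⟨P', a'⟩ hPa' H
    simp only [Finset.coe_product, Set.mem_prod, Finset.mem_coe, Finset.mem_filter,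
      mem_Omega] at hPa hPa'
    have hoff : ∀ v, v ≠ t → P v = P' v := by
      intro v hv
      have := congrFun H v
      simpa [Function.update_of_ne hv] using this
    have hT := congrFun H t
    simp only [Function.update_self, Prod.mk.injEq] at hT
    have hB : ∀ v, (P v).2 = (P' v).2 := by
      intro v
      rcases eq_or_ne v t with rfl | hv
      · exact hT.2
      · rw [hoff v hv]
    have h1 : (P t).1 = (P' t).1 := hrec P P' hPa.1.2 hPa'.1.2 hoff hB
    have hPP : P = P' := by
      funext v
      rcases eq_or_ne v t with rfl | hv
      · exact Prod.ext h1 (hB v)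
      · exact hoff v hv
    simp [hPP, hT.1]

/-- Overwrite the `A`-coordinates at two distinct streams. -/
lemma overwrite_two (t u : Fin s) (htu : t ≠ u) (Q : (Fin s → ZMod N × ZMod N) → Prop)
    [DecidablePred Q]
    (hrec : ∀ P P' : Fin s → ZMod N × ZMod N, Q P → Q P' →
      (∀ v, v ≠ t → v ≠ u → P v = P' v) → (∀ v, (P v).2 = (P' v).2) →
      (P t).1 = (P' t).1 ∧ (P u).1 = (P' u).1) :
    ((Omega N s).filter Q).card * (N * N) ≤ (Omega N s).card := by
  classical
  have key := Finset.card_le_card_of_injOn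
    (f := fun Pa : (Fin s → ZMod N × ZMod N) × (ZMod N × ZMod N) =>
      Function.update (Function.update Pa.1 t ((Pa.2.1, (Pa.1 t).2) : ZMod N × ZMod N))
        u ((Pa.2.2, (Pa.1 u).2) : ZMod N × ZMod N))
    (s := ((Omega N s).filter Q) ×ˢ (Finset.univ : Finset (ZMod N × ZMod N)))
    (t := Omega N s) ?_ ?_
  · simpa [Finset.card_product, ZMod.card] using key
  · rintro ⟨P, a⟩ hPa
    simp only [Finset.mem_coe, Finset.mem_product, Finset.mem_filter, mem_Omega] at hPa
    rw [Finset.mem_coe, mem_Omega]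
    intro v
    rcases eq_or_ne v u with rfl | hvu
    · simpa using hPa.1.1 v
    · rcases eq_or_ne v t with rfl | hvt
      · simpa [Function.update_of_ne hvu, Function.update_self] using hPa.1.1 v
      · simpa [Function.update_of_ne hvu, Function.update_of_ne hvt] using hPa.1.1 v
  · rintro ⟨P, a⟩ hPa ⟨P', a'⟩ hPa' H
    simp only [Finset.coe_product, Set.mem_prod, Finset.mem_coe, Finset.mem_filter,
      mem_Omega] at hPa hPa'
    have hoff : ∀ v, v ≠ t → v ≠ u → P v = P' v := by
      intro v hvt hvu
      have := congrFun H v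
      simpa [Function.update_of_ne hvu, Function.update_of_ne hvt] using this
    have hT := congrFun H t
    simp only [Function.update_of_ne htu, Function.update_self, Prod.mk.injEq] at hT
    have hU := congrFun H u
    simp only [Function.update_self, Prod.mk.injEq] at hU
    have hB : ∀ v, (P v).2 = (P' v).2 := by
      intro v
      rcases eq_or_ne v u with rfl | hvu
      · exact hU.2
      · rcases eq_or_ne v t with rfl | hvt
        · exact hT.2
        · rw [hoff v hvt hvu]
    have h1 := hrec P P' hPa.1.2 hPa'.1.2 hoff hB
    have hPP : P = P' := by
      funext v
      rcases eq_or_ne v u with rfl | hvu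
      · exact Prod.ext h1.2 (hB v)
      · rcases eq_or_ne v t with rfl | hvt
        · exact Prod.ext h1.1 (hB v)
        · exact hoff v hvt hvu
    have ha : a = a' := Prod.ext hT.1 hU.1
    simp [hPP, ha]

/-- Overwrite the whole SOPI at one stream. -/
lemma overwrite_full (t : Fin s) (Q : (Fin s → ZMod N × ZMod N) → Prop)
    [DecidablePred Q]
    (hrec : ∀ P P' : Fin s → ZMod N × ZMod N, Q P → Q P' →
      (∀ t', (P t').2 ≠ 0) → (∀ t', (P' t').2 ≠ 0) →
      (∀ v, v ≠ t → P v = P' v) → P t = P' t) :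
    ((Omega N s).filter Q).card * (N * (N - 1)) ≤ (Omega N s).card := by
  classical
  have hScard : ((Finset.univ : Finset (ZMod N)) ×ˢ
      ((Finset.univ : Finset (ZMod N)).filter (fun b => b ≠ 0))).card = N * (N - 1) := by
    rw [Finset.card_product, Finset.filter_ne']
    rw [Finset.card_erase_of_mem (Finset.mem_univ _)]
    simp [ZMod.card]
  have key := Finset.card_le_card_of_injOn
    (f := fun Pa : (Fin s → ZMod N × ZMod N) × (ZMod N × ZMod N) =>
      Function.update Pa.1 t Pa.2)
    (s := ((Omega N s).filter Q) ×ˢ ((Finset.univ : Finset (ZMod N)) ×ˢ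
      ((Finset.univ : Finset (ZMod N)).filter (fun b => b ≠ 0))))
    (t := Omega N s) ?_ ?_
  · rwa [Finset.card_product, hScard] at key
  · rintro ⟨P, a⟩ hPa
    simp only [Finset.mem_coe, Finset.mem_product, Finset.mem_filter, mem_Omega] at hPa
    rw [Finset.mem_coe, mem_Omega]
    intro v
    rcases eq_or_ne v t with rfl | hv
    · simpa using hPa.2.2
    · simpa [Function.update_of_ne hv] using hPa.1.1 v
  · rintro ⟨P, a⟩ hPa ⟨P', a'⟩ hPa' H
    simp only [Finset.coe_product, Set.mem_prod, Finset.mem_coe, Finset.mem_filter,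
      mem_Omega] at hPa hPa'
    have hoff : ∀ v, v ≠ t → P v = P' v := by
      intro v hv
      have := congrFun H v
      simpa [Function.update_of_ne hv] using this
    have h1 : P t = P' t := hrec P P' hPa.1.2 hPa'.1.2 hPa.1.1 hPa'.1.1 hoff
    have hPP : P = P' := by
      funext v
      rcases eq_or_ne v t with rfl | hv
      · exact h1
      · exact hoff v hv
    have hT := congrFun H t
    simp only [Function.update_self] at hT
    simp [hPP, hT]

/-- Single collision bound. -/
lemma single_bound (t1 t2 : Fin s) (h12 : t1 ≠ t2) (p1 p2 : ZMod N) :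
    ((Omega N s).filter (fun P =>
      (P t1).1 + p1 * (P t1).2 = (P t2).1 + p2 * (P t2).2)).card * N
      ≤ (Omega N s).card := by
  classical
  apply overwrite_one t2
  intro P P' hQ hQ' hoff hB
  have h1 := hoff t1 h12
  have ha1 : (P t1).1 = (P' t1).1 := by rw [h1]
  have hb1 : (P t1).2 = (P' t1).2 := by rw [h1]
  linear_combination hQ' - hQ + ha1 + p1 * hb1 - p2 * (hB t2)

/-- Double collision bound, second pair involving a stream `t4` outside `{t1, t2}`. -/
lemma cross_bound (t1 t2 t3 t4 : Fin s) (h12 : t1 ≠ t2) (h34 : t3 ≠ t4)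
    (h41 : t4 ≠ t1) (h42 : t4 ≠ t2) (p1 p2 p3 p4 : ZMod N) :
    ((Omega N s).filter (fun P =>
      (P t1).1 + p1 * (P t1).2 = (P t2).1 + p2 * (P t2).2 ∧
      (P t3).1 + p3 * (P t3).2 = (P t4).1 + p4 * (P t4).2)).card * (N * (N - 1))
      ≤ (Omega N s).card := by
  classical
  have key := overwrite_two (N := N) t2 t4 h42.symm
    (fun P => (P t1).1 + p1 * (P t1).2 = (P t2).1 + p2 * (P t2).2 ∧
      (P t3).1 + p3 * (P t3).2 = (P t4).1 + p4 * (P t4).2) ?_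
  · calc _ ≤ ((Omega N s).filter _).card * (N * N) := by
          exact Nat.mul_le_mul_left _ (Nat.mul_le_mul_left N (Nat.sub_le N 1))
       _ ≤ _ := key
  · intro P P' hQ hQ' hoff hB
    have h1 : P t1 = P' t1 := hoff t1 h12 h41.symm
    have ha1 : (P t1).1 = (P' t1).1 := by rw [h1]
    have hb1 : (P t1).2 = (P' t1).2 := by rw [h1]
    have hfirst : (P t2).1 = (P' t2).1 :=
      by linear_combination hQ'.1 - hQ.1 + ha1 + p1 * hb1 - p2 * (hB t2)
    refine ⟨hfirst, ?_⟩
    have ha3 : (P t3).1 = (P' t3).1 := by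
      rcases eq_or_ne t3 t2 with rfl | h32
      · exact hfirst
      · rw [hoff t3 h32 h34]
    linear_combination hQ'.2 - hQ.2 + ha3 + p3 * (hB t3) - p4 * (hB t4)

/-- Double collision bound when both collisions involve the same two streams. -/
lemma two_stream_bound [Fact N.Prime] (t1 t2 : Fin s) (h12 : t1 ≠ t2)
    (p1 p2 r1 r2 : ZMod N) (hpr : ¬(p1 = r1 ∧ p2 = r2)) :
    ((Omega N s).filter (fun P =>
      (P t1).1 + p1 * (P t1).2 = (P t2).1 + p2 * (P t2).2 ∧
      (P t1).1 + r1 * (P t1).2 = (P t2).1 + r2 * (P t2).2)).card * (N * (N - 1))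
      ≤ (Omega N s).card := by
  classical
  by_cases hp2 : p2 = r2
  · have hp1 : p1 ≠ r1 := fun h => hpr ⟨h, hp2⟩
    have hempty : ((Omega N s).filter (fun P =>
        (P t1).1 + p1 * (P t1).2 = (P t2).1 + p2 * (P t2).2 ∧
        (P t1).1 + r1 * (P t1).2 = (P t2).1 + r2 * (P t2).2)) = ∅ := by
      rw [Finset.eq_empty_iff_forall_notMem]
      rintro P hP
      rw [Finset.mem_filter, mem_Omega] at hP
      obtain ⟨hΩ, hQ1, hQ2⟩ := hP
      have key : (p1 - r1) * (P t1).2 = 0 := by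
        rw [hp2] at hQ1
        linear_combination hQ1 - hQ2
      rcases mul_eq_zero.mp key with h | h
      · exact hp1 (sub_eq_zero.mp h)
      · exact hΩ t1 h
    rw [hempty]
    simp
  · apply overwrite_full t2
    intro P P' hQ hQ' hΩ hΩ' hoff
    have h1 : P t1 = P' t1 := hoff t1 h12
    have ha1 : (P t1).1 = (P' t1).1 := by rw [h1]
    have hb1 : (P t1).2 = (P' t1).2 := by rw [h1]
    have hd : p2 - r2 ≠ 0 := sub_ne_zero_of_ne hp2
    have hkey : (p2 - r2) * (P t2).2 = (p2 - r2) * (P' t2).2 := by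
      linear_combination hQ.2 - hQ.1 + hQ'.1 - hQ'.2 + (p1 - r1) * hb1
    have hb2 : (P t2).2 = (P' t2).2 := mul_left_cancel₀ hd hkey
    have ha2 : (P t2).1 = (P' t2).1 := by
      linear_combination hQ'.1 - hQ.1 + ha1 + p1 * hb1 - p2 * hb2
    exact Prod.ext ha2 hb2

/-- Core double-collision bound. -/
lemma pair_core [Fact N.Prime] (t1 t2 t3 t4 : Fin s) (p1 p2 p3 p4 : ZMod N)
    (h12 : t1 ≠ t2) (h34 : t3 ≠ t4)
    (hA : ¬(t3 = t1 ∧ p3 = p1 ∧ t4 = t2 ∧ p4 = p2))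
    (hB : ¬(t3 = t2 ∧ p3 = p2 ∧ t4 = t1 ∧ p4 = p1)) :
    ((Omega N s).filter (fun P =>
      (P t1).1 + p1 * (P t1).2 = (P t2).1 + p2 * (P t2).2 ∧
      (P t3).1 + p3 * (P t3).2 = (P t4).1 + p4 * (P t4).2)).card * (N * (N - 1))
      ≤ (Omega N s).card := by
  classical
  by_cases h4 : t4 ≠ t1 ∧ t4 ≠ t2
  · exact cross_bound t1 t2 t3 t4 h12 h34 h4.1 h4.2 p1 p2 p3 p4
  · by_cases h3 : t3 ≠ t1 ∧ t3 ≠ t2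
    · have hswap : ((Omega N s).filter (fun P =>
          (P t1).1 + p1 * (P t1).2 = (P t2).1 + p2 * (P t2).2 ∧
          (P t3).1 + p3 * (P t3).2 = (P t4).1 + p4 * (P t4).2)) =
          ((Omega N s).filter (fun P =>
          (P t1).1 + p1 * (P t1).2 = (P t2).1 + p2 * (P t2).2 ∧
          (P t4).1 + p4 * (P t4).2 = (P t3).1 + p3 * (P t3).2)) := by
        apply Finset.filter_congr
        intro P _
        exact and_congr_right (fun _ => eq_comm)
      rw [hswap]
      exact cross_bound t1 t2 t4 t3 h12 h34.symm h3.1 h3.2 p1 p2 p4 p3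
    · push_neg at h4 h3
      rcases Classical.em (t3 = t1) with h31 | h31
      · subst h31
        have h42 : t4 = t2 := h4 h34.symm
        subst h42
        apply two_stream_bound _ _ h12 p1 p2 p3 p4
        rintro ⟨hp1, hp2⟩
        exact hA ⟨rfl, hp1.symm, rfl, hp2.symm⟩
      · have h32 : t3 = t2 := h3 h31
        subst h32
        have h41 : t4 = t1 := by
          by_contra h
          exact h34 ((h4 h).symm)
        subst h41
        have hswap : ((Omega N s).filter (fun P =>
            (P t4).1 + p1 * (P t4).2 = (P t3).1 + p2 * (P t3).2 ∧
            (P t3).1 + p3 * (P t3).2 = (P t4).1 + p4 * (P t4).2)) =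
            ((Omega N s).filter (fun P =>
            (P t4).1 + p1 * (P t4).2 = (P t3).1 + p2 * (P t3).2 ∧
            (P t4).1 + p4 * (P t4).2 = (P t3).1 + p3 * (P t3).2)) := by
          apply Finset.filter_congr
          intro P _
          exact and_congr_right (fun _ => eq_comm)
        rw [hswap]
        apply two_stream_bound _ _ h12 p1 p2 p4 p3
        rintro ⟨hp1, hp2⟩
        exact hB ⟨rfl, hp2.symm, rfl, hp1.symm⟩

/-- Double collision bound for two distinct cross-stream pairs. -/
lemma pair_bound [Fact N.Prime] (f : Fin M → Fin s × ZMod N)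
    (hf : Function.Injective f) (e e' : Fin M × Fin M)
    (he : e.1 < e.2) (he' : e'.1 < e'.2)
    (ht : (f e.1).1 ≠ (f e.2).1) (ht' : (f e'.1).1 ≠ (f e'.2).1) (hne : e ≠ e') :
    ((Omega N s).filter (fun P => collP f P e ∧ collP f P e')).card * (N * (N - 1))
      ≤ (Omega N s).card := by
  unfold collP
  apply pair_core (f e.1).1 (f e.2).1 (f e'.1).1 (f e'.2).1
    (f e.1).2 (f e.2).2 (f e'.1).2 (f e'.2).2 ht ht'
  · rintro ⟨h1, h2, h3, h4⟩
    have hk1 : e'.1 = e.1 := hf (Prod.ext h1 h2)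
    have hk2 : e'.2 = e.2 := hf (Prod.ext h3 h4)
    exact hne (Prod.ext hk1.symm hk2.symm)
  · rintro ⟨h1, h2, h3, h4⟩
    have hk1 : e'.1 = e.2 := hf (Prod.ext h1 h2)
    have hk2 : e'.2 = e.1 := hf (Prod.ext h3 h4)
    have : e.1 < e.1 := by
      calc e.1 < e.2 := he
        _ = e'.1 := hk1.symm
        _ < e'.2 := he'
        _ = e.1 := hk2
    exact lt_irrefl _ this

/-- Single collision bound, `collP` form. -/
lemma single_bound' (f : Fin M → Fin s × ZMod N) (e : Fin M × Fin M)
    (ht : (f e.1).1 ≠ (f e.2).1) :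
    ((Omega N s).filter (fun P => collP f P e)).card * N ≤ (Omega N s).card := by
  unfold collP
  exact single_bound (f e.1).1 (f e.2).1 ht (f e.1).2 (f e.2).2

/-- For any map `g` on a finite linearly ordered type, the domain size is at most the
image size plus the number of ordered colliding pairs. -/
lemma card_le_image_add_pairs {α β : Type*} [Fintype α] [LinearOrder α] [DecidableEq β]
    (g : α → β) :
    Fintype.card α ≤ (Finset.univ.image g).card +
      (Finset.univ.filter (fun e : α × α => e.1 < e.2 ∧ g e.1 = g e.2)).card := by
  classical
  set I := Finset.univ.image g with hI
  set Pr := Finset.univ.filter (fun e : α × α => e.1 < e.2 ∧ g e.1 = g e.2) with hPr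
  have hcard : Fintype.card α = ∑ b ∈ I, (Finset.univ.filter (fun a => g a = b)).card := by
    rw [← Finset.card_univ]
    exact Finset.card_eq_sum_card_fiberwise
      (fun x _ => Finset.mem_image_of_mem g (Finset.mem_univ x))
  have hpairs : Pr.card = ∑ b ∈ I, (Pr.filter (fun e => g e.1 = b)).card :=
    Finset.card_eq_sum_card_fiberwise (fun e _ =>
      Finset.mem_image_of_mem g (Finset.mem_univ e.1))
  have hfiber : ∀ b ∈ I, (Finset.univ.filter (fun a => g a = b)).card ≤
      1 + (Pr.filter (fun e => g e.1 = b)).card := by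
    intro b hb
    set F := Finset.univ.filter (fun a => g a = b) with hF
    have hFne : F.Nonempty := by
      obtain ⟨a, _, ha⟩ := Finset.mem_image.mp hb
      exact ⟨a, by simp [hF, ha]⟩
    set a0 := F.min' hFne with ha0
    have ha0F : a0 ∈ F := F.min'_mem hFne
    have ha0b : g a0 = b := (Finset.mem_filter.mp ha0F).2
    have hinj : (F.erase a0).card ≤ (Pr.filter (fun e => g e.1 = b)).card := by
      apply Finset.card_le_card_of_injOn (fun a => (a0, a))
      · intro a ha
        have haF : a ∈ F := Finset.mem_of_mem_erase ha
        have hab : g a = b := (Finset.mem_filter.mp haF).2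
        have hlt : a0 < a :=
          lt_of_le_of_ne (F.min'_le a haF) (Ne.symm (Finset.ne_of_mem_erase ha))
        simp only [Finset.mem_coe, hPr, Finset.mem_filter, Finset.mem_univ, true_and]
        exact ⟨⟨hlt, by rw [ha0b, hab]⟩, ha0b⟩
      · intro a _ a' _ h
        exact (Prod.mk.injEq _ _ _ _).mp h |>.2
    have : F.card = (F.erase a0).card + 1 := (Finset.card_erase_add_one ha0F).symm
    omega
  calc Fintype.card α = ∑ b ∈ I, (Finset.univ.filter (fun a => g a = b)).card := hcard
    _ ≤ ∑ b ∈ I, (1 + (Pr.filter (fun e => g e.1 = b)).card) :=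
        Finset.sum_le_sum hfiber
    _ = I.card + ∑ b ∈ I, (Pr.filter (fun e => g e.1 = b)).card := by
        rw [Finset.sum_add_distrib, Finset.sum_const, smul_eq_mul, mul_one]
    _ = I.card + Pr.card := by rw [← hpairs]

/-- Step A: size bound relating image cardinality with collision count. -/
lemma stepA [Fact N.Prime] (f : Fin M → Fin s × ZMod N) (hf : Function.Injective f)
    {P : Fin s → ZMod N × ZMod N} (hP : P ∈ Omega N s) :
    M ≤ (Finset.univ.image (fun k : Fin M =>
          (P (f k).1).1 + (f k).2 * (P (f k).1).2)).card +
        ((pairE f).filter (collP f P)).card := by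
  classical
  have base := card_le_image_add_pairs (fun k : Fin M =>
    (P (f k).1).1 + (f k).2 * (P (f k).1).2)
  rw [Fintype.card_fin] at base
  refine base.trans (le_of_eq ?_)
  congr 1
  refine congrArg Finset.card ?_
  rw [pairE, Finset.filter_filter]
  apply Finset.filter_congr
  intro e _
  unfold collP
  constructor
  · rintro ⟨hlt, hcol⟩
    refine ⟨⟨hlt, ?_⟩, hcol⟩
    intro hst
    rw [hst] at hcol
    have hcancel : ((f e.1).2 - (f e.2).2) * (P (f e.2).1).2 = 0 := by
      linear_combination hcol
    rcases mul_eq_zero.mp hcancel with h | h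
    · have hp : (f e.1).2 = (f e.2).2 := sub_eq_zero.mp h
      have : e.1 = e.2 := hf (Prod.ext hst hp)
      exact absurd this (ne_of_lt hlt)
    · exact (mem_Omega.mp hP) _ h
  · rintro ⟨⟨hlt, _⟩, hcol⟩
    exact ⟨hlt, hcol⟩

/-- The second moment identity. -/
lemma second_moment (f : Fin M → Fin s × ZMod N) :
    ∑ P ∈ Omega N s, ((pairE f).filter (collP f P)).card ^ 2
      = ∑ e ∈ pairE f, ∑ e' ∈ pairE f,
          ((Omega N s).filter (fun P => collP f P e ∧ collP f P e')).card := by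
  classical
  have h1 : ∀ P, ((pairE f).filter (collP f P)).card ^ 2
      = ∑ e ∈ pairE f, ∑ e' ∈ pairE f,
        ((if collP f P e then 1 else 0) * (if collP f P e' then 1 else 0)) := by
    intro P
    rw [Finset.card_filter, sq, Finset.sum_mul_sum]
  calc ∑ P ∈ Omega N s, ((pairE f).filter (collP f P)).card ^ 2
      = ∑ P ∈ Omega N s, ∑ e ∈ pairE f, ∑ e' ∈ pairE f,
          ((if collP f P e then 1 else 0) * (if collP f P e' then 1 else 0)) :=
        Finset.sum_congr rfl (fun P _ => h1 P)
    _ = ∑ e ∈ pairE f, ∑ P ∈ Omega N s, ∑ e' ∈ pairE f,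
          ((if collP f P e then 1 else 0) * (if collP f P e' then 1 else 0)) :=
        Finset.sum_comm
    _ = ∑ e ∈ pairE f, ∑ e' ∈ pairE f, ∑ P ∈ Omega N s,
          ((if collP f P e then 1 else 0) * (if collP f P e' then 1 else 0)) :=
        Finset.sum_congr rfl (fun e _ => Finset.sum_comm)
    _ = ∑ e ∈ pairE f, ∑ e' ∈ pairE f,
          ((Omega N s).filter (fun P => collP f P e ∧ collP f P e')).card := by
        refine Finset.sum_congr rfl (fun e _ => Finset.sum_congr rfl (fun e' _ => ?_))
        rw [Finset.card_filter]
        refine Finset.sum_congr rfl (fun P _ => ?_)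
        by_cases hc1 : collP f P e <;> by_cases hc2 : collP f P e' <;>
          simp [hc1, hc2]

/-- Number of cross-stream pairs is at most `M²/2`. -/
lemma pairE_card (f : Fin M → Fin s × ZMod N) : (pairE f).card * 2 ≤ M * M := by
  classical
  have hdisj : Disjoint (pairE f) ((pairE f).image Prod.swap) := by
    rw [Finset.disjoint_left]
    intro e he hsw
    obtain ⟨e', he', hee⟩ := Finset.mem_image.mp hsw
    have h1 : e.1 < e.2 := ((Finset.mem_filter.mp he).2).1
    have h2 : e'.1 < e'.2 := ((Finset.mem_filter.mp he').2).1
    rw [← hee] at h1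
    simp only [Prod.fst_swap, Prod.snd_swap] at h1
    exact absurd h2 (not_lt_of_gt h1)
  have hcard : ((pairE f) ∪ (pairE f).image Prod.swap).card ≤ M * M := by
    calc _ ≤ (Finset.univ : Finset (Fin M × Fin M)).card := Finset.card_le_card (Finset.subset_univ _)
      _ = M * M := by simp [Finset.card_univ]
  rw [Finset.card_union_of_disjoint hdisj,
    Finset.card_image_of_injective _ Prod.swap_injective] at hcard
  omega

end SopiAux
open Finset SopiAux in
theorem sopi_recovery_failure_prob (N s M K : ℕ) (hN : N.Prime) [NeZero N]
    (hs : 1 ≤ s) (δ : ℝ) (hδ : 0 < δ) (hδ1 : δ < 1)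
    (hM : (M : ℝ) = (K : ℝ) / (1 - δ)) (hM2 : (M : ℝ) ^ 2 ≤ 2 * N)
    (f : Fin M → Fin s × ZMod N) (hf : Function.Injective f) :
    (((Finset.univ.filter (fun P : Fin s → ZMod N × ZMod N =>
          (∀ t, (P t).2 ≠ 0) ∧
          (Finset.univ.image (fun k : Fin M =>
            (P (f k).1).1 + (f k).2 * (P (f k).1).2)).card < K)).card : ℝ) /
      ((Finset.univ.filter (fun P : Fin s → ZMod N × ZMod N =>
          ∀ t, (P t).2 ≠ 0)).card : ℝ)) ≤ 1 / (δ ^ 2 * N) := by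
  classical
  haveI : Fact N.Prime := ⟨hN⟩
  have hN2 : 2 ≤ N := hN.two_le
  have hNR : (2:ℝ) ≤ (N:ℝ) := by exact_mod_cast hN2
  have hNpos : (0:ℝ) < N := by linarith
  have h1δ : (0:ℝ) < 1 - δ := by linarith
  have hK : (K:ℝ) = (1 - δ) * M := by rw [hM]; field_simp
  have hδN : (0:ℝ) < δ^2 * N := by positivity
  have hΩpos : 0 < (Omega N s).card :=
    Finset.card_pos.mpr ⟨fun _ => (0,1), mem_Omega.mpr (fun _ => one_ne_zero)⟩
  have hwpos : (0:ℝ) < ((Omega N s).card : ℝ) := by exact_mod_cast hΩpos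
  have hnum : (Finset.univ.filter (fun P : Fin s → ZMod N × ZMod N =>
      (∀ t, (P t).2 ≠ 0) ∧ (Finset.univ.image (fun k : Fin M =>
        (P (f k).1).1 + (f k).2 * (P (f k).1).2)).card < K))
      = (Omega N s).filter (fun P => (Finset.univ.image (fun k : Fin M =>
        (P (f k).1).1 + (f k).2 * (P (f k).1).2)).card < K) := by
    rw [Omega, Finset.filter_filter]
  have hden : (Finset.univ.filter (fun P : Fin s → ZMod N × ZMod N =>
      ∀ t, (P t).2 ≠ 0)) = Omega N s := rfl
  rw [hnum, hden]
  set Bad := (Omega N s).filter (fun P => (Finset.univ.image (fun k : Fin M =>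
    (P (f k).1).1 + (f k).2 * (P (f k).1).2)).card < K) with hBad
  have hBsub : Bad ⊆ Omega N s := Finset.filter_subset _ _
  rcases Nat.eq_zero_or_pos M with hM0 | hMpos
  · have hK0 : K = 0 := by
      have h0 : (K:ℝ) = 0 := by rw [hK, hM0]; simp
      exact_mod_cast h0
    have hBadE : Bad = ∅ := by
      rw [hBad, hK0]
      apply Finset.filter_false_of_mem
      intro P _
      exact Nat.not_lt_zero _
    rw [hBadE]
    simp only [Finset.card_empty, Nat.cast_zero, zero_div]
    positivity
  · have hMR : (0:ℝ) < M := by exact_mod_cast hMpos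
    -- lower bound on collision count for bad P
    have hXlow : ∀ P ∈ Bad, δ * M < (((pairE f).filter (collP f P)).card : ℝ) := by
      intro P hP
      rw [hBad, Finset.mem_filter] at hP
      obtain ⟨hPΩ, hPK⟩ := hP
      have hA := stepA f hf hPΩ
      have hA' : (M:ℝ) ≤ ((Finset.univ.image (fun k : Fin M =>
          (P (f k).1).1 + (f k).2 * (P (f k).1).2)).card : ℝ)
          + (((pairE f).filter (collP f P)).card : ℝ) := by exact_mod_cast hA
      have hYK : ((Finset.univ.image (fun k : Fin M =>
          (P (f k).1).1 + (f k).2 * (P (f k).1).2)).card : ℝ) < K := by exact_mod_cast hPK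
      have hδM : δ * M = (M:ℝ) - K := by rw [hK]; ring
      linarith
    set T : ℕ := ∑ P ∈ Omega N s, ((pairE f).filter (collP f P)).card ^ 2 with hT
    have hbT : (Bad.card : ℝ) * (δ*M)^2 ≤ (T:ℝ) := by
      have h1 : ∀ P ∈ Bad, (δ*M)^2 ≤ ((((pairE f).filter (collP f P)).card : ℝ))^2 := by
        intro P hP
        have h := hXlow P hP
        have hnn : 0 ≤ δ * M := by positivity
        exact pow_le_pow_left₀ hnn h.le 2
      calc (Bad.card : ℝ) * (δ*M)^2 = ∑ _P ∈ Bad, (δ*M)^2 := by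
            rw [Finset.sum_const, nsmul_eq_mul]
        _ ≤ ∑ P ∈ Bad, ((((pairE f).filter (collP f P)).card : ℝ))^2 :=
            Finset.sum_le_sum h1
        _ ≤ ∑ P ∈ Omega N s, ((((pairE f).filter (collP f P)).card : ℝ))^2 :=
            Finset.sum_le_sum_of_subset_of_nonneg hBsub (fun _ _ _ => sq_nonneg _)
        _ = (T:ℝ) := by rw [hT]; push_cast; ring
    -- counting bounds
    have hdiag : ∀ e ∈ pairE f,
        (((Omega N s).filter (fun P => collP f P e ∧ collP f P e)).card : ℝ) * ((N:ℝ))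
          ≤ ((Omega N s).card : ℝ) := by
      intro e he
      have heE := Finset.mem_filter.mp he
      have heq : (Omega N s).filter (fun P => collP f P e ∧ collP f P e)
          = (Omega N s).filter (fun P => collP f P e) := by
        apply Finset.filter_congr
        intro P _
        exact and_self_iff
      rw [heq]
      exact_mod_cast single_bound' f e heE.2.2
    have hoffd : ∀ e ∈ pairE f, ∀ e' ∈ pairE f, e ≠ e' →
        (((Omega N s).filter (fun P => collP f P e ∧ collP f P e')).card : ℝ)
          * ((N:ℝ) * ((N:ℝ) - 1)) ≤ ((Omega N s).card : ℝ) := by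
      intro e he e' he' hne
      have heE := Finset.mem_filter.mp he
      have heE' := Finset.mem_filter.mp he'
      have hnat := pair_bound f hf e e' heE.2.1 heE'.2.1 heE.2.2 heE'.2.2 hne
      have hcast : ((N * (N-1) : ℕ) : ℝ) = (N:ℝ) * ((N:ℝ) - 1) := by
        push_cast [Nat.cast_sub (by omega : 1 ≤ N)]
        ring
      calc (((Omega N s).filter (fun P => collP f P e ∧ collP f P e')).card : ℝ)
            * ((N:ℝ) * ((N:ℝ) - 1))
          = ((((Omega N s).filter (fun P => collP f P e ∧ collP f P e')).card
              * (N * (N-1)) : ℕ) : ℝ) := by rw [Nat.cast_mul, hcast]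
        _ ≤ ((Omega N s).card : ℝ) := by exact_mod_cast hnat
    set m := (pairE f).card with hm
    set w := ((Omega N s).card : ℝ) with hw
    have hN1nn : (0:ℝ) ≤ (N:ℝ) - 1 := by linarith
    have hN1pos : (0:ℝ) < (N:ℝ) - 1 := by linarith
    have hwnn : (0:ℝ) ≤ w := hwpos.le
    -- second moment bound
    have hTsum : (T:ℝ) * ((N:ℝ) * ((N:ℝ)-1)) ≤ (m:ℝ) * (w * ((N:ℝ)-1) + ((m:ℝ)-1) * w) := by
      have hTr : (T:ℝ) = ∑ e ∈ pairE f, ∑ e' ∈ pairE f,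
          (((Omega N s).filter (fun P => collP f P e ∧ collP f P e')).card : ℝ) := by
        rw [hT, second_moment f]
        push_cast
        rfl
      rw [hTr, Finset.sum_mul]
      have hper : ∀ e ∈ pairE f,
          (∑ e' ∈ pairE f, (((Omega N s).filter
              (fun P => collP f P e ∧ collP f P e')).card : ℝ)) * ((N:ℝ) * ((N:ℝ)-1))
            ≤ w * ((N:ℝ)-1) + ((m:ℝ)-1) * w := by
        intro e he
        have hsplit : ∑ e' ∈ pairE f, (((Omega N s).filter
            (fun P => collP f P e ∧ collP f P e')).card : ℝ)
            = (∑ e' ∈ (pairE f).erase e, (((Omega N s).filter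
                (fun P => collP f P e ∧ collP f P e')).card : ℝ))
              + (((Omega N s).filter (fun P => collP f P e ∧ collP f P e)).card : ℝ) := by
          rw [Finset.sum_erase_add _ _ he]
        rw [hsplit, add_mul]
        have hterm1 : (∑ e' ∈ (pairE f).erase e, (((Omega N s).filter
            (fun P => collP f P e ∧ collP f P e')).card : ℝ)) * ((N:ℝ) * ((N:ℝ)-1))
            ≤ ((m:ℝ)-1) * w := by
          rw [Finset.sum_mul]
          have hb : ∀ e' ∈ (pairE f).erase e, (((Omega N s).filter
              (fun P => collP f P e ∧ collP f P e')).card : ℝ) * ((N:ℝ) * ((N:ℝ)-1)) ≤ w := by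
            intro e' he'
            exact hoffd e he e' (Finset.mem_of_mem_erase he')
              (Ne.symm (Finset.ne_of_mem_erase he'))
          calc _ ≤ ∑ _e' ∈ (pairE f).erase e, w := Finset.sum_le_sum hb
            _ = (((pairE f).erase e).card : ℝ) * w := by rw [Finset.sum_const, nsmul_eq_mul]
            _ = ((m:ℝ)-1) * w := by
                rw [Finset.card_erase_of_mem he, ← hm]
                congr 1
                have hm1 : 1 ≤ m := Finset.card_pos.mpr ⟨e, he⟩
                push_cast [Nat.cast_sub hm1]
                ring
        have hterm2 : (((Omega N s).filter
            (fun P => collP f P e ∧ collP f P e)).card : ℝ) * ((N:ℝ) * ((N:ℝ)-1))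
            ≤ w * ((N:ℝ)-1) := by
          have := hdiag e he
          calc (((Omega N s).filter (fun P => collP f P e ∧ collP f P e)).card : ℝ)
                * ((N:ℝ) * ((N:ℝ)-1))
              = ((((Omega N s).filter (fun P => collP f P e ∧ collP f P e)).card : ℝ)
                  * (N:ℝ)) * ((N:ℝ)-1) := by ring
            _ ≤ w * ((N:ℝ)-1) := mul_le_mul_of_nonneg_right this hN1nn
        linarith
      calc ∑ e ∈ pairE f, (∑ e' ∈ pairE f, (((Omega N s).filter
            (fun P => collP f P e ∧ collP f P e')).card : ℝ)) * ((N:ℝ) * ((N:ℝ)-1))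
          ≤ ∑ _e ∈ pairE f, (w * ((N:ℝ)-1) + ((m:ℝ)-1) * w) := Finset.sum_le_sum hper
        _ = (m:ℝ) * (w * ((N:ℝ)-1) + ((m:ℝ)-1) * w) := by
            rw [Finset.sum_const, nsmul_eq_mul]
    -- combinatorial size bounds
    have hm2 : (m:ℝ) * 2 ≤ (M:ℝ) * M := by exact_mod_cast pairE_card f
    have hmN : (m:ℝ) ≤ (N:ℝ) := by nlinarith [sq_nonneg ((M:ℝ))]
    have hF6 : (m:ℝ) * (w * ((N:ℝ)-1) + ((m:ℝ)-1) * w) ≤ (M:ℝ)^2 * ((N:ℝ)-1) * w := by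
      have hmnn : (0:ℝ) ≤ (m:ℝ) := Nat.cast_nonneg m
      nlinarith [mul_nonneg hmnn hwnn, mul_nonneg (mul_nonneg hmnn hwnn) hN1nn,
        mul_le_mul_of_nonneg_right (mul_le_mul_of_nonneg_left
          (by linarith : (m:ℝ) - 1 ≤ (N:ℝ) - 1) hmnn) hwnn,
        mul_le_mul_of_nonneg_right hm2 (mul_nonneg hN1nn hwnn)]
    have hTN : (T:ℝ) * (N:ℝ) ≤ (M:ℝ)^2 * w := by
      have h1 : (T:ℝ) * (N:ℝ) * ((N:ℝ)-1) ≤ (M:ℝ)^2 * w * ((N:ℝ)-1) := by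
        calc (T:ℝ) * (N:ℝ) * ((N:ℝ)-1) = (T:ℝ) * ((N:ℝ) * ((N:ℝ)-1)) := by ring
          _ ≤ (m:ℝ) * (w * ((N:ℝ)-1) + ((m:ℝ)-1) * w) := hTsum
          _ ≤ (M:ℝ)^2 * ((N:ℝ)-1) * w := hF6
          _ = (M:ℝ)^2 * w * ((N:ℝ)-1) := by ring
      exact le_of_mul_le_mul_right h1 hN1pos
    -- conclude
    have hfinal : (Bad.card : ℝ) * (δ^2 * (N:ℝ)) ≤ w := by
      have h1 : (Bad.card : ℝ) * (δ*M)^2 * (N:ℝ) ≤ (M:ℝ)^2 * w := by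
        calc (Bad.card : ℝ) * (δ*M)^2 * (N:ℝ) ≤ (T:ℝ) * (N:ℝ) :=
              mul_le_mul_of_nonneg_right hbT hNpos.le
          _ ≤ (M:ℝ)^2 * w := hTN
      have h2 : ((Bad.card : ℝ) * (δ^2 * (N:ℝ))) * (M:ℝ)^2 ≤ w * (M:ℝ)^2 := by
        calc ((Bad.card : ℝ) * (δ^2 * (N:ℝ))) * (M:ℝ)^2
            = (Bad.card : ℝ) * (δ*M)^2 * (N:ℝ) := by ring
          _ ≤ (M:ℝ)^2 * w := h1
          _ = w * (M:ℝ)^2 := by ring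
      exact le_of_mul_le_mul_right h2 (by positivity)
    rw [div_le_div_iff₀ hwpos hδN]
    linarith
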